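/- Let (E,T,S,e) be a conditional expectation preserving system. Then (E,T,S,e) is conditionally weakly mixing (i.e., (1/n) Σ_{k=0}^{n−1} |T((S^k Pe)·Qe) − TPe·TQe| → 0 in order for all band projections P, Q on E) if and only if (1/n) Σ_{k=0}^{n−1} |T((S^k f)·g) − Tf·Tg| → 0 in order as n → ∞ for all f, g ∈ E_e. -/

import Mathlib

open Finset

/- `E` is a Riesz space (real vector lattice). -/
variable {E : Type*} [AddCommGroup E] [Lattice E]
  [CovariantClass E E (· + ·) (· ≤ ·)] [Module ℝ E] [PosSMulMono ℝ E]

/-- A sequence `u` in `E` order converges to `l` if there is a sequence `p` decreasing to `0`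
with `|u n - l| ≤ p n` for all `n`. -/
def OrderConv (u : ℕ → E) (l : E) : Prop :=
  ∃ p : ℕ → E, Antitone p ∧ IsGLB (Set.range p) 0 ∧ ∀ n, |u n - l| ≤ p n

/-- `l` is the greatest lower bound of `A` relative to the subset `F`. -/
def IsGLBIn (F A : Set E) (l : E) : Prop :=
  (∀ a ∈ A, l ≤ a) ∧ ∀ b ∈ F, (∀ a ∈ A, b ≤ a) → b ≤ l

/-- `F` is Dedekind complete (in its induced order): every nonempty subset of `F`
bounded above in `F` has a supremum in `F`. -/
def DedekindCompleteIn (F : Set E) : Prop :=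
  ∀ A : Set E, A ⊆ F → A.Nonempty → (∃ b ∈ F, ∀ a ∈ A, a ≤ b) →
    ∃ s ∈ F, (∀ a ∈ A, a ≤ s) ∧ ∀ b ∈ F, (∀ a ∈ A, a ≤ b) → s ≤ b

/-- `u` is a weak order unit of (the Riesz subspace) `F`:  `u > 0` and the band generated by
`u` is everything, equivalently no nonzero positive element of `F` is disjoint from `u`. -/
def IsWeakOrderUnitIn (F : Set E) (u : E) : Prop :=
  0 < u ∧ ∀ f ∈ F, 0 ≤ f → f ⊓ u = 0 → f = 0

/-- Band projections on a Riesz space: the linear idempotents `P` with `0 ≤ P ≤ I`. -/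
def IsBandProjection (P : E →ₗ[ℝ] E) : Prop :=
  (∀ f, P (P f) = P f) ∧ ∀ f, 0 ≤ f → 0 ≤ P f ∧ P f ≤ f

/-- `L` (restricted to `F`) is a conditional expectation operator on `F`: a positive
order continuous linear projection whose range is a Dedekind complete Riesz subspace and
which maps weak order units to weak order units. -/
def IsCondExpOn (F : Set E) (L : E → E) : Prop :=
  (∀ f ∈ F, L f ∈ F) ∧
  (∀ f ∈ F, ∀ g ∈ F, L (f + g) = L f + L g) ∧
  (∀ r : ℝ, ∀ f ∈ F, L (r • f) = r • L f) ∧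
  (∀ f ∈ F, 0 ≤ f → 0 ≤ L f) ∧
  (∀ A : Set E, A ⊆ F → A.Nonempty → DirectedOn (· ≥ ·) A → IsGLBIn F A 0 →
      IsGLBIn F (L '' A) 0) ∧
  (∀ f ∈ F, L (L f) = L f) ∧
  (∀ f ∈ L '' F, ∀ g ∈ L '' F, f ⊔ g ∈ L '' F) ∧
  DedekindCompleteIn (L '' F) ∧
  (∀ u ∈ F, IsWeakOrderUnitIn F u → IsWeakOrderUnitIn F (L u))

/-- Order continuity of a positive operator: downward directed sets with infimum `0`
are mapped to sets with infimum `0`. -/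
def OrderContinuousOp (S : E →ₗ[ℝ] E) : Prop :=
  ∀ A : Set E, A.Nonempty → DirectedOn (· ≥ ·) A → IsGLB A 0 → IsGLB (S '' A) 0

/-- Riesz homomorphism: a linear map preserving the lattice operations. -/
def IsRieszHom (S : E →ₗ[ℝ] E) : Prop := ∀ f g, S (f ⊔ g) = S f ⊔ S g

/-- `(E,T,S,e)` is a conditional expectation preserving system: `E` is a Dedekind complete
Riesz space with weak order unit `e`, `T` a conditional expectation operator on `E` with
`Te = e`, and `S` an order continuous Riesz homomorphism with `Se = e` and `TSPe = TPe`
for every band projection `P` on `E`. -/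
def IsCEPS (T S : E →ₗ[ℝ] E) (e : E) : Prop :=
  DedekindCompleteIn (Set.univ : Set E) ∧
  IsWeakOrderUnitIn (Set.univ : Set E) e ∧
  IsCondExpOn Set.univ T ∧ T e = e ∧
  IsRieszHom S ∧ OrderContinuousOp S ∧ S e = e ∧
  ∀ P : E →ₗ[ℝ] E, IsBandProjection P → T (S (P e)) = T (P e)

/-- The Cesàro means `S_n f = (1/n) ∑_{k=0}^{n-1} S^k f`. -/
noncomputable def ces (S : E →ₗ[ℝ] E) (f : E) (n : ℕ) : E :=
  (n : ℝ)⁻¹ • ∑ k ∈ Finset.range n, (S ^ k) f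

/-- The principal ideal `E_e` generated by `e`. -/
def idealE (e : E) : Set E := {f : E | ∃ k : ℝ, 0 ≤ k ∧ |f| ≤ k • e}

/-- The system `(E,T,S,e)` is ergodic if `L_S f ∈ R(T)` for every `S`-invariant `f`
(where `L_S f` is any order limit of the Cesàro means of `f`). -/
def IsErgodic (T S : E →ₗ[ℝ] E) (e : E) : Prop :=
  ∀ f l : E, S f = f → OrderConv (ces S f) l → l ∈ Set.range T

/-- `m` is the `f`-algebra multiplication on the principal ideal `E_e`:  commutative,
bilinear, positive, with unit `e`, determined on components by `Pe·Qe = PQe` for band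
projections `P, Q`, and order continuous (so extendable from components by order limits). -/
def IsFAlgMulOn (e : E) (m : E → E → E) : Prop :=
  (∀ f ∈ idealE e, ∀ g ∈ idealE e, m f g ∈ idealE e) ∧
  (∀ f ∈ idealE e, ∀ g ∈ idealE e, m f g = m g f) ∧
  (∀ f ∈ idealE e, ∀ g ∈ idealE e, ∀ h ∈ idealE e, m (f + g) h = m f h + m g h) ∧
  (∀ r : ℝ, ∀ f ∈ idealE e, ∀ g ∈ idealE e, m (r • f) g = r • m f g) ∧
  (∀ f ∈ idealE e, ∀ g ∈ idealE e, 0 ≤ f → 0 ≤ g → 0 ≤ m f g) ∧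
  (∀ f ∈ idealE e, m e f = f) ∧
  (∀ P Q : E →ₗ[ℝ] E, IsBandProjection P → IsBandProjection Q → m (P e) (Q e) = P (Q e)) ∧
  (∀ g ∈ idealE e, 0 ≤ g → ∀ (u : ℕ → E) (l : E), (∀ n, u n ∈ idealE e) → l ∈ idealE e →
      OrderConv u l → OrderConv (fun n => m (u n) g) (m l g))

set_option linter.unusedSectionVars false
set_option maxHeartbeats 1000000

namespace WMaux

local instance (priority := 100) : IsOrderedAddMonoid E :=
  { add_le_add_left := fun a b h c => add_le_add_left h c }

lemma abs_def' (a : E) : |a| = a ⊔ -a := rfl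

lemma smul_nonneg' {r : ℝ} (hr : 0 ≤ r) {a : E} (ha : 0 ≤ a) : 0 ≤ r • a := by
  simpa using smul_le_smul_of_nonneg_left ha hr

lemma smul_mono_scalar {r s : ℝ} (h : r ≤ s) {a : E} (ha : 0 ≤ a) : r • a ≤ s • a := by
  have h1 : 0 ≤ (s - r) • a := smul_nonneg' (by linarith) ha
  have h2 := add_le_add_left h1 (r • a)
  simpa [← add_smul] using h2

lemma smul_sup' {r : ℝ} (hr : 0 ≤ r) (a b : E) : r • (a ⊔ b) = (r • a) ⊔ (r • b) := by
  rcases eq_or_lt_of_le hr with h | h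
  · simp [← h]
  · apply le_antisymm
    · have h1 : a ⊔ b ≤ r⁻¹ • ((r • a) ⊔ (r • b)) := by
        apply sup_le
        · have h2 := smul_le_smul_of_nonneg_left
            (le_sup_left : r • a ≤ (r • a) ⊔ (r • b)) (inv_nonneg.2 hr)
          simpa [smul_smul, inv_mul_cancel₀ h.ne'] using h2
        · have h2 := smul_le_smul_of_nonneg_left
            (le_sup_right : r • b ≤ (r • a) ⊔ (r • b)) (inv_nonneg.2 hr)
          simpa [smul_smul, inv_mul_cancel₀ h.ne'] using h2
      have h3 := smul_le_smul_of_nonneg_left h1 hr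
      simpa [smul_smul, mul_inv_cancel₀ h.ne'] using h3
    · exact sup_le (smul_le_smul_of_nonneg_left le_sup_left hr)
        (smul_le_smul_of_nonneg_left le_sup_right hr)

lemma smul_inf' {r : ℝ} (hr : 0 ≤ r) (a b : E) : r • (a ⊓ b) = (r • a) ⊓ (r • b) := by
  have h : a ⊓ b = -((-a) ⊔ (-b)) := by
    rw [neg_sup]; simp
  rw [h, smul_neg, smul_sup' hr, neg_sup]
  simp

lemma abs_smul' (r : ℝ) (a : E) : |r • a| = |r| • |a| := by
  rcases le_total 0 r with hr | hr
  · rw [abs_of_nonneg hr, abs_def', abs_def', smul_sup' hr, smul_neg]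
  · have h1 : r • a = -((-r) • a) := by simp
    rw [abs_of_nonpos hr, h1, abs_neg, abs_def', abs_def',
      smul_sup' (by linarith : (0:ℝ) ≤ -r), smul_neg, sup_comm]

lemma posPart_smul' {r : ℝ} (hr : 0 ≤ r) (a : E) : (r • a)⁺ = r • a⁺ := by
  have h := smul_sup' hr a 0
  simpa [posPart_def] using h.symm

lemma negPart_smul' {r : ℝ} (hr : 0 ≤ r) (a : E) : (r • a)⁻ = r • a⁻ := by
  rw [← posPart_neg, ← posPart_neg, ← smul_neg, posPart_smul' hr]

lemma abs_le_iff' {a b : E} : |a| ≤ b ↔ a ≤ b ∧ -a ≤ b := sup_le_iff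

lemma abs_sub_le_of_both {a b c : E} (h1 : a - b ≤ c) (h2 : b - a ≤ c) : |a - b| ≤ c :=
  sup_le h1 (by simpa using h2)

/-- ⊓-subadditivity for nonneg elements. -/
lemma inf_add_subadd {a b c : E} (ha : 0 ≤ a) (hb : 0 ≤ b) (hc : 0 ≤ c) :
    (a + b) ⊓ c ≤ a ⊓ c + b ⊓ c := by
  have h1 : a ⊓ c + b ⊓ c = ((a ⊓ c) + b) ⊓ ((a ⊓ c) + c) := (add_inf _ _ _)
  have h2 : (a ⊓ c) + b = (a + b) ⊓ (c + b) := inf_add _ _ _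
  have h3 : (a ⊓ c) + c = (a + c) ⊓ (c + c) := inf_add _ _ _
  rw [h1, h2, h3]
  refine le_inf (le_inf ?_ ?_) (le_inf ?_ ?_)
  · exact inf_le_left
  · exact inf_le_right.trans (le_add_of_nonneg_right hb)
  · exact inf_le_right.trans (le_add_of_nonneg_left ha)
  · exact inf_le_right.trans (le_add_of_nonneg_left hc)

section Sup

variable (hD : DedekindCompleteIn (Set.univ : Set E))
include hD

lemma exists_isLUB {A : Set E} (hne : A.Nonempty) (hbdd : BddAbove A) :
    ∃ s, IsLUB A s := by
  obtain ⟨b, hb⟩ := hbdd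
  obtain ⟨s, -, h1, h2⟩ := hD A (Set.subset_univ A) hne ⟨b, Set.mem_univ b, fun a ha => hb ha⟩
  exact ⟨s, fun a ha => h1 a ha, fun c hc => h2 c (Set.mem_univ c) (fun a ha => hc ha)⟩

omit hD in
open Classical in
noncomputable def mySup (A : Set E) : E :=
  if h : A.Nonempty ∧ BddAbove A then Classical.choose (exists_isLUB hD h.1 h.2) else 0

lemma isLUB_mySup {A : Set E} (hne : A.Nonempty) (hbdd : BddAbove A) :
    IsLUB A (mySup hD A) := by
  rw [mySup, dif_pos ⟨hne, hbdd⟩]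
  exact Classical.choose_spec (exists_isLUB hD hne hbdd)

/-- Dedekind complete ⟹ Archimedean-type property. -/
lemma arch_le_zero {c e : E} (hc : 0 ≤ c) (he : 0 ≤ e) (h : ∀ n : ℕ, (n : ℝ) • c ≤ e) :
    c ≤ 0 := by
  set A : Set E := Set.range (fun n : ℕ => (n : ℝ) • c) with hA
  have hne : A.Nonempty := ⟨0, ⟨0, by simp⟩⟩
  have hbdd : BddAbove A := ⟨e, by rintro x ⟨n, rfl⟩; exact h n⟩
  obtain ⟨s, hs⟩ := exists_isLUB hD hne hbdd
  have hub : s - c ∈ upperBounds A := by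
    rintro x ⟨n, rfl⟩
    have h1 : ((n : ℝ) + 1) • c ∈ A := ⟨n + 1, by push_cast; ring_nf⟩
    have h2 := hs.1 h1
    have h3 : (n : ℝ) • c + c ≤ s := by rwa [add_smul, one_smul] at h2
    exact le_sub_iff_add_le.2 h3
  have h4 := hs.2 hub
  have h5 : (0:E) ≤ s - c - s := sub_nonneg.mpr h4
  simpa using h5

end Sup

section BandProj

variable (hD : DedekindCompleteIn (Set.univ : Set E))

/-- The sup of `f ⊓ n • u` over `n : ℕ`; main ingredient of the band projection onto the
band generated by `u`. -/
noncomputable def p0 (u f : E) : E := mySup hD (Set.range fun n : ℕ => f ⊓ (n : ℝ) • u)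

lemma isLUB_p0 (u f : E) : IsLUB (Set.range fun n : ℕ => f ⊓ (n : ℝ) • u) (p0 hD u f) :=
  isLUB_mySup hD ⟨_, ⟨0, rfl⟩⟩ ⟨f, by rintro x ⟨n, rfl⟩; exact inf_le_left⟩

lemma le_p0 (u f : E) (n : ℕ) : f ⊓ (n : ℝ) • u ≤ p0 hD u f :=
  (isLUB_p0 hD u f).1 ⟨n, rfl⟩

lemma p0_le {u f b : E} (hb : ∀ n : ℕ, f ⊓ (n : ℝ) • u ≤ b) : p0 hD u f ≤ b :=
  (isLUB_p0 hD u f).2 (by rintro x ⟨n, rfl⟩; exact hb n)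

lemma real_le_p0 {u : E} (hu : 0 ≤ u) (f : E) {c : ℝ} (hc : 0 ≤ c) :
    f ⊓ c • u ≤ p0 hD u f := by
  obtain ⟨n, hn⟩ := exists_nat_ge c
  exact le_trans (inf_le_inf_left f (smul_mono_scalar hn hu)) (le_p0 hD u f n)

lemma p0_le_self (u f : E) : p0 hD u f ≤ f := p0_le hD (fun n => inf_le_left)

lemma p0_nonneg {u f : E} (hf : 0 ≤ f) : 0 ≤ p0 hD u f := by
  have h0 : f ⊓ (0 : ℝ) • u = 0 := by
    rw [zero_smul]; exact inf_eq_right.2 hf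
  have h := le_p0 hD u f 0
  simp only [Nat.cast_zero] at h
  rw [h0] at h
  exact h

lemma p0_mono {u f g : E} (h : f ≤ g) : p0 hD u f ≤ p0 hD u g :=
  p0_le hD (fun n => le_trans (inf_le_inf_right _ h) (le_p0 hD u g n))

lemma p0_mono_u {u v : E} (huv : u ≤ v) (f : E) : p0 hD u f ≤ p0 hD v f :=
  p0_le hD (fun n => le_trans
    (inf_le_inf_left f (smul_le_smul_of_nonneg_left huv (Nat.cast_nonneg n))) (le_p0 hD v f n))

lemma p0_zero (u : E) (hu : 0 ≤ u) : p0 hD u 0 = 0 := by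
  apply le_antisymm (p0_le_self hD u 0)
  exact p0_nonneg hD le_rfl

lemma p0_add {u : E} (hu : 0 ≤ u) {f g : E} (hf : 0 ≤ f) (hg : 0 ≤ g) :
    p0 hD u (f + g) = p0 hD u f + p0 hD u g := by
  apply le_antisymm
  · apply p0_le hD
    intro n
    have h1 : (f + g) ⊓ (n : ℝ) • u ≤ f ⊓ (n : ℝ) • u + g ⊓ (n : ℝ) • u :=
      inf_add_subadd hf hg (smul_nonneg' (Nat.cast_nonneg n) hu)
    exact h1.trans (add_le_add (le_p0 hD u f n) (le_p0 hD u g n))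
  · have key : ∀ n k : ℕ, f ⊓ (n:ℝ) • u + g ⊓ (k:ℝ) • u ≤ p0 hD u (f + g) := by
      intro n k
      refine le_trans (le_inf (add_le_add inf_le_left inf_le_left) ?_)
        (real_le_p0 hD hu (f + g) (c := (n:ℝ) + (k:ℝ)) (by positivity))
      rw [add_smul]
      exact add_le_add inf_le_right inf_le_right
    have h2 : ∀ n : ℕ, f ⊓ (n:ℝ) • u ≤ p0 hD u (f + g) - p0 hD u g := by
      intro n
      rw [le_sub_iff_add_le, add_comm, ← le_sub_iff_add_le]
      apply p0_le hD
      intro k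
      rw [le_sub_iff_add_le, add_comm, ← le_sub_iff_add_le]
      exact le_sub_iff_add_le.2 (key n k)
    have h3 := p0_le hD h2
    calc p0 hD u f + p0 hD u g ≤ (p0 hD u (f + g) - p0 hD u g) + p0 hD u g :=
          add_le_add_left h3 _
      _ = p0 hD u (f + g) := sub_add_cancel _ _

lemma p0_smul {u : E} (hu : 0 ≤ u) {r : ℝ} (hr : 0 ≤ r) (f : E) :
    p0 hD u (r • f) = r • p0 hD u f := by
  rcases eq_or_lt_of_le hr with h | h
  · rw [← h, zero_smul, zero_smul, p0_zero hD u hu]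
  · apply le_antisymm
    · apply p0_le hD
      intro n
      have h1 : r • (f ⊓ (r⁻¹ * (n:ℝ)) • u) = (r • f) ⊓ (n : ℝ) • u := by
        rw [smul_inf' h.le, smul_smul]
        congr 2
        field_simp
      rw [← h1]
      exact smul_le_smul_of_nonneg_left
        (real_le_p0 hD hu f (by positivity)) h.le
    · rw [← le_inv_smul_iff_of_pos h]
      apply p0_le hD
      intro n
      rw [le_inv_smul_iff_of_pos h]
      have h1 : r • (f ⊓ (n:ℝ) • u) = (r • f) ⊓ (r * n) • u := by
        rw [smul_inf', smul_smul]; exact h.le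
      rw [h1]
      exact real_le_p0 hD hu (r • f) (by positivity)

lemma p0_le_of_mem {u x : E} (hx : 0 ≤ x) (hxu : x ≤ u) : p0 hD u x = x := by
  apply le_antisymm (p0_le_self hD u x)
  have h1 : x ⊓ (1 : ℝ) • u = x := by rw [one_smul]; exact inf_eq_left.2 hxu
  calc x = x ⊓ ((1:ℕ) : ℝ) • u := by rw [← h1]; norm_num
    _ ≤ _ := le_p0 hD u x 1

lemma p0_fix {u v x : E} (hx : 0 ≤ x) (huv : u ≤ v) :
    p0 hD v (p0 hD u x) = p0 hD u x := by
  apply le_antisymm (p0_le_self hD v _)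
  apply p0_le hD
  intro n
  refine le_trans (le_inf (le_p0 hD u x n) ?_) (le_p0 hD v (p0 hD u x) n)
  exact inf_le_right.trans (smul_le_smul_of_nonneg_left huv (Nat.cast_nonneg n))

lemma p0_idem {u x : E} (hx : 0 ≤ x) : p0 hD u (p0 hD u x) = p0 hD u x :=
  p0_fix hD hx le_rfl

lemma p0_disj {u x : E} (hu : 0 ≤ u) (hx : 0 ≤ x) (hd : x ⊓ u = 0) : p0 hD u x = 0 := by
  apply le_antisymm
  · apply p0_le hD
    intro n
    rcases Nat.eq_zero_or_pos n with h | h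
    · subst h; simp only [Nat.cast_zero, zero_smul]
      exact inf_le_right
    · have h1 : x ⊓ (n : ℝ) • u ≤ ((n:ℝ) • x) ⊓ ((n:ℝ) • u) :=
        inf_le_inf_right _ (by calc x = (1:ℝ) • x := (one_smul _ _).symm
          _ ≤ (n:ℝ) • x := smul_mono_scalar (by exact_mod_cast h) hx)
      rw [← smul_inf' (Nat.cast_nonneg n), hd, smul_zero] at h1
      exact h1
  · exact p0_nonneg hD hx

end BandProj

section BProj

variable (hD : DedekindCompleteIn (Set.univ : Set E))

lemma p0_diff_rep {u : E} (hu : 0 ≤ u) {a b f : E} (ha : 0 ≤ a) (hb : 0 ≤ b)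
    (hab : a - b = f) : p0 hD u a - p0 hD u b = p0 hD u f⁺ - p0 hD u f⁻ := by
  have h2 : a - b = f⁺ - f⁻ := by rw [hab, posPart_sub_negPart]
  have h1 : a + f⁻ = f⁺ + b := sub_eq_sub_iff_add_eq_add.1 h2
  have h5 := congrArg (p0 hD u) h1
  rw [p0_add hD hu ha (negPart_nonneg f), p0_add hD hu (posPart_nonneg f) hb] at h5
  exact sub_eq_sub_iff_add_eq_add.2 h5

/-- The band projection onto the band generated by `u ≥ 0`. -/
noncomputable def bproj (u : E) (hu : 0 ≤ u) : E →ₗ[ℝ] E where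
  toFun f := p0 hD u f⁺ - p0 hD u f⁻
  map_add' f g := by
    have h := p0_diff_rep hD hu (E := E) (a := f⁺ + g⁺) (b := f⁻ + g⁻) (f := f + g)
      (by positivity) (by positivity) (by
        have hf := posPart_sub_negPart f
        have hg := posPart_sub_negPart g
        have h9 : f⁺ + g⁺ - (f⁻ + g⁻) = (f⁺ - f⁻) + (g⁺ - g⁻) := by abel
        rw [h9, hf, hg])
    rw [p0_add hD hu (posPart_nonneg f) (posPart_nonneg g),
        p0_add hD hu (negPart_nonneg f) (negPart_nonneg g)] at h
    show p0 hD u (f + g)⁺ - p0 hD u (f + g)⁻ =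
      (p0 hD u f⁺ - p0 hD u f⁻) + (p0 hD u g⁺ - p0 hD u g⁻)
    rw [← h]
    abel
  map_smul' r f := by
    simp only [RingHom.id_apply]
    rcases le_total 0 r with hr | hr
    · rw [posPart_smul' hr, negPart_smul' hr, p0_smul hD hu hr, p0_smul hD hu hr,
        smul_sub]
    · have h1 : r • f = -((-r) • f) := by simp
      rw [h1, posPart_neg, negPart_neg, posPart_smul' (by linarith), negPart_smul' (by linarith),
        p0_smul hD hu (by linarith), p0_smul hD hu (by linarith)]
      have h8 : r • (p0 hD u f⁺ - p0 hD u f⁻) = -((-r) • (p0 hD u f⁺ - p0 hD u f⁻)) := by simp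
      rw [h8, smul_sub, neg_sub]

lemma bproj_apply (u : E) (hu : 0 ≤ u) (f : E) :
    bproj hD u hu f = p0 hD u f⁺ - p0 hD u f⁻ := rfl

lemma bproj_of_nonneg (u : E) (hu : 0 ≤ u) {f : E} (hf : 0 ≤ f) :
    bproj hD u hu f = p0 hD u f := by
  rw [bproj_apply, posPart_eq_self.2 hf, negPart_eq_zero.2 hf, p0_zero hD u hu, sub_zero]

lemma posPart_of_disj {a b : E} (ha : 0 ≤ a) (hb : 0 ≤ b) (hab : a ⊓ b = 0) :
    (a - b)⁺ = a := by
  have h1 : (a - b)⁺ = (a ⊔ b) - b := by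
    rw [posPart_def, sup_sub]
    congr 1
    simp
  have h2 : a ⊓ b + (a ⊔ b) = a + b := inf_add_sup a b
  rw [hab, zero_add] at h2
  rw [h1, h2]
  simp

lemma negPart_of_disj {a b : E} (ha : 0 ≤ a) (hb : 0 ≤ b) (hab : a ⊓ b = 0) :
    (a - b)⁻ = b := by
  rw [← posPart_neg, neg_sub, posPart_of_disj hb ha (by rwa [inf_comm])]

lemma bproj_isBandProjection (u : E) (hu : 0 ≤ u) : IsBandProjection (bproj hD u hu) := by
  constructor
  · intro f
    have ha : 0 ≤ p0 hD u f⁺ := p0_nonneg hD (posPart_nonneg f)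
    have hb : 0 ≤ p0 hD u f⁻ := p0_nonneg hD (negPart_nonneg f)
    have hab : p0 hD u f⁺ ⊓ p0 hD u f⁻ = 0 := by
      apply le_antisymm
      · calc p0 hD u f⁺ ⊓ p0 hD u f⁻ ≤ f⁺ ⊓ f⁻ :=
              inf_le_inf (p0_le_self hD u f⁺) (p0_le_self hD u f⁻)
          _ = 0 := posPart_inf_negPart_eq_zero f
      · exact le_inf ha hb
    have h1 : bproj hD u hu f = p0 hD u f⁺ - p0 hD u f⁻ := rfl
    rw [h1, bproj_apply, posPart_of_disj ha hb hab, negPart_of_disj ha hb hab,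
      p0_idem hD (posPart_nonneg f), p0_idem hD (negPart_nonneg f), ← h1]
  · intro f hf
    rw [bproj_of_nonneg hD u hu hf]
    exact ⟨p0_nonneg hD hf, p0_le_self hD u f⟩

lemma id_isBandProjection : IsBandProjection (LinearMap.id : E →ₗ[ℝ] E) :=
  ⟨fun f => rfl, fun f hf => ⟨hf, le_rfl⟩⟩

end BProj

section Freudenthal

variable (hD : DedekindCompleteIn (Set.univ : Set E))
include hD

omit hD in
lemma posPart_le_abs' (f : E) : f⁺ ≤ |f| := by
  have h := posPart_add_negPart f
  have h2 : f⁺ = |f| - f⁻ := by rw [← h]; abel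
  rw [h2]
  simpa using negPart_nonneg f

lemma p0_zero_u {f : E} (hf : 0 ≤ f) : p0 hD (0 : E) f = 0 := by
  refine le_antisymm (p0_le hD fun n => ?_) (p0_nonneg hD hf)
  rw [smul_zero]
  exact inf_le_right

omit hD in
/-- `x` is a (finite) linear combination of band-projection components of `e`. -/
def IsComb (e x : E) : Prop := ∃ (M : ℕ) (a : ℕ → ℝ) (P : ℕ → E →ₗ[ℝ] E),
  (∀ i, IsBandProjection (P i)) ∧ x = ∑ i ∈ Finset.range M, a i • P i e

omit hD in
lemma comb_zero (e : E) : IsComb e 0 :=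
  ⟨0, fun _ => 0, fun _ => LinearMap.id, fun _ => id_isBandProjection, by simp⟩

omit hD in
lemma comb_of_bp {e : E} (P : E →ₗ[ℝ] E) (hP : IsBandProjection P) (r : ℝ) :
    IsComb e (r • P e) :=
  ⟨1, fun _ => r, fun _ => P, fun _ => hP, by simp⟩

omit hD in
lemma comb_smul {e x : E} (h : IsComb e x) (r : ℝ) : IsComb e (r • x) := by
  obtain ⟨M, a, P, hP, rfl⟩ := h
  exact ⟨M, fun i => r * a i, P, hP, by rw [Finset.smul_sum]; simp [smul_smul]⟩

omit hD in
lemma comb_add {e x y : E} (hx : IsComb e x) (hy : IsComb e y) : IsComb e (x + y) := by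
  obtain ⟨M, a, P, hP, rfl⟩ := hx
  obtain ⟨N, b, Q, hQ, rfl⟩ := hy
  refine ⟨M + N, fun i => if i < M then a i else b (i - M),
    fun i => if i < M then P i else Q (i - M), fun i => ?_, ?_⟩
  · dsimp only; split_ifs
    · exact hP _
    · exact hQ _
  · rw [Finset.sum_range_add]
    congr 1
    · apply Finset.sum_congr rfl
      intro i hi
      have hi' : i < M := Finset.mem_range.1 hi
      simp only [hi', if_true]
    · apply Finset.sum_congr rfl
      intro i _
      have h1 : ¬ (M + i < M) := by omega
      have h2 : M + i - M = i := by omega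
      simp only [h1, if_false, h2]

omit hD in
lemma comb_sum {e : E} {s : Finset ℕ} {g : ℕ → E} (h : ∀ i ∈ s, IsComb e (g i)) :
    IsComb e (∑ i ∈ s, g i) :=
  Finset.sum_induction g (IsComb e) (fun _ _ => comb_add) (comb_zero e) h

omit hD in
lemma comb_sub {e x y : E} (hx : IsComb e x) (hy : IsComb e y) : IsComb e (x - y) := by
  have h := comb_add hx (comb_smul hy (-1))
  simpa [sub_eq_add_neg] using h

lemma freudenthal_step {e f : E} (hf0 : 0 ≤ f) (hfe : f ≤ e) {ε : ℝ} (hε : 0 < ε) :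
    ∃ x : E, IsComb e x ∧ 0 ≤ f - x ∧ f - x ≤ ε • e := by
  have he : 0 ≤ e := le_trans hf0 hfe
  obtain ⟨M, hM⟩ := exists_nat_ge (1 / ε)
  have hMε : 1 ≤ (M : ℝ) * ε := by
    rw [div_le_iff₀ hε] at hM; linarith
  set t : ℕ → ℝ := fun i => (i : ℝ) * ε with ht
  have ht0 : ∀ i, 0 ≤ t i := fun i => by positivity
  set u : ℕ → E := fun i => (f - t i • e)⁺ with hu_def
  have hu : ∀ i, 0 ≤ u i := fun i => posPart_nonneg _
  set Q : ℕ → E →ₗ[ℝ] E := fun i => bproj hD (u i) (hu i) with hQdef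
  have hQbp : ∀ i, IsBandProjection (Q i) := fun i => bproj_isBandProjection hD _ _
  have humono : ∀ i, u (i + 1) ≤ u i := by
    intro i
    apply posPart_mono
    apply sub_le_sub_left
    apply smul_mono_scalar _ he
    have : (i : ℝ) ≤ (i : ℝ) + 1 := by linarith
    calc t i = (i : ℝ) * ε := rfl
      _ ≤ ((i : ℝ) + 1) * ε := by nlinarith
      _ = t (i + 1) := by rw [ht]; push_cast; ring
  -- F1
  have F1 : ∀ i, Q i (f - t i • e) = u i := by
    intro i
    rw [hQdef]
    show p0 hD (u i) (f - t i • e)⁺ - p0 hD (u i) (f - t i • e)⁻ = u i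
    have h1 : p0 hD (u i) (f - t i • e)⁺ = u i := p0_le_of_mem hD (hu i) le_rfl
    have h2 : p0 hD (u i) (f - t i • e)⁻ = 0 :=
      p0_disj hD (hu i) (negPart_nonneg _)
        (by rw [inf_comm]; exact posPart_inf_negPart_eq_zero _)
    rw [h1, h2, sub_zero]
  have hQe_eq : ∀ i, Q i e = p0 hD (u i) e := fun i => bproj_of_nonneg hD _ _ he
  have hQf_eq : ∀ i, Q i f = p0 hD (u i) f := fun i => bproj_of_nonneg hD _ _ hf0
  -- expand linearity
  have hlin : ∀ i (c : ℝ), Q i (f - c • e) = Q i f - c • Q i e := by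
    intro i c
    rw [map_sub, map_smul]
  -- lower bound
  have lower : ∀ i, t i • (Q i e - Q (i + 1) e) ≤ Q i f - Q (i + 1) f := by
    intro i
    have hB : Q (i + 1) (f - t i • e) ≤ u i := by
      rw [hQdef]
      show p0 hD (u (i+1)) (f - t i • e)⁺ - p0 hD (u (i+1)) (f - t i • e)⁻ ≤ u i
      have h1 : p0 hD (u (i+1)) (f - t i • e)⁺ ≤ u i := by
        have : (f - t i • e)⁺ = u i := rfl
        rw [this]; exact p0_le_self hD _ _
      have h2 : (0:E) ≤ p0 hD (u (i+1)) (f - t i • e)⁻ := p0_nonneg hD (negPart_nonneg _)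
      calc p0 hD (u (i+1)) (f - t i • e)⁺ - p0 hD (u (i+1)) (f - t i • e)⁻
          ≤ p0 hD (u (i+1)) (f - t i • e)⁺ - 0 := sub_le_sub_left h2 _
        _ ≤ u i := by rwa [sub_zero]
    have hle : Q (i + 1) (f - t i • e) ≤ Q i (f - t i • e) := by rw [F1 i]; exact hB
    have h3 := sub_nonneg.2 hle
    rw [hlin, hlin] at h3
    rw [← sub_nonneg, smul_sub]
    have h4 : Q i f - Q (i + 1) f - (t i • Q i e - t i • Q (i + 1) e)
        = Q i f - t i • Q i e - (Q (i + 1) f - t i • Q (i + 1) e) := by abel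
    rw [h4]
    exact h3
  -- upper bound
  have upper : ∀ i, Q i f - Q (i + 1) f ≤ t (i + 1) • (Q i e - Q (i + 1) e) := by
    intro i
    have hB : Q i (f - t (i + 1) • e) ≤ u (i + 1) := by
      rw [hQdef]
      show p0 hD (u i) (f - t (i+1) • e)⁺ - p0 hD (u i) (f - t (i+1) • e)⁻ ≤ u (i + 1)
      have h1 : p0 hD (u i) (f - t (i+1) • e)⁺ = u (i + 1) :=
        p0_le_of_mem hD (hu (i+1)) (humono i)
      have h2 : (0:E) ≤ p0 hD (u i) (f - t (i+1) • e)⁻ := p0_nonneg hD (negPart_nonneg _)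
      calc p0 hD (u i) (f - t (i+1) • e)⁺ - p0 hD (u i) (f - t (i+1) • e)⁻
          ≤ p0 hD (u i) (f - t (i+1) • e)⁺ - 0 := sub_le_sub_left h2 _
        _ = u (i + 1) := by rw [sub_zero, h1]
    have hle : Q i (f - t (i + 1) • e) ≤ Q (i + 1) (f - t (i + 1) • e) := by
      rw [F1 (i+1)]; exact hB
    have h3 := sub_nonneg.2 hle
    rw [hlin, hlin] at h3
    rw [← sub_nonneg, smul_sub]
    have h4 : t (i+1) • Q i e - t (i+1) • Q (i + 1) e - (Q i f - Q (i + 1) f)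
        = Q (i+1) f - t (i+1) • Q (i+1) e - (Q i f - t (i+1) • Q i e) := by abel
    rw [h4]
    exact h3
  -- endpoints
  have hQ0f : Q 0 f = f := by
    have h1 := F1 0
    have ht0' : t 0 = 0 := by simp [ht]
    rw [ht0', zero_smul, sub_zero] at h1
    rw [h1, hu_def]
    show (f - t 0 • e)⁺ = f
    rw [ht0', zero_smul, sub_zero]
    exact posPart_eq_self.2 hf0
  have hQMf : Q M f = 0 := by
    have huM : u M = 0 := by
      rw [hu_def]
      show (f - t M • e)⁺ = 0
      rw [posPart_eq_zero]
      rw [sub_nonpos]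
      calc f ≤ e := hfe
        _ = (1:ℝ) • e := (one_smul _ _).symm
        _ ≤ (t M) • e := smul_mono_scalar hMε he
    rw [hQf_eq M, huM, p0_zero_u hD hf0]
  -- the approximant
  set s : E := ∑ i ∈ Finset.range M, t i • (Q i e - Q (i + 1) e) with hs
  have hcomb : IsComb e s := by
    apply comb_sum
    intro i _
    rw [smul_sub]
    exact comb_sub (comb_of_bp _ (hQbp i) _) (comb_of_bp _ (hQbp (i+1)) _)
  have htel : ∑ i ∈ Finset.range M, (Q i f - Q (i + 1) f) = f := by
    rw [Finset.sum_range_sub' (fun i => Q i f) M, hQ0f, hQMf, sub_zero]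
  have hfs : f - s = ∑ i ∈ Finset.range M,
      ((Q i f - Q (i + 1) f) - t i • (Q i e - Q (i + 1) e)) := by
    rw [Finset.sum_sub_distrib, htel, hs]
  refine ⟨s, hcomb, ?_, ?_⟩
  · rw [hfs]
    apply Finset.sum_nonneg
    intro i _
    rw [sub_nonneg]
    exact lower i
  · rw [hfs]
    have hd : ∀ i ∈ Finset.range M, (Q i f - Q (i + 1) f) - t i • (Q i e - Q (i + 1) e)
        ≤ ε • (Q i e - Q (i + 1) e) := by
      intro i _
      have h5 := upper i
      have h6 : t (i + 1) • (Q i e - Q (i + 1) e) - t i • (Q i e - Q (i + 1) e)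
          = ε • (Q i e - Q (i + 1) e) := by
        rw [← sub_smul]
        congr 1
        rw [ht]
        push_cast
        ring
      calc (Q i f - Q (i + 1) f) - t i • (Q i e - Q (i + 1) e)
          ≤ t (i + 1) • (Q i e - Q (i + 1) e) - t i • (Q i e - Q (i + 1) e) :=
            sub_le_sub_right h5 _
        _ = ε • (Q i e - Q (i + 1) e) := h6
    calc (∑ i ∈ Finset.range M, ((Q i f - Q (i + 1) f) - t i • (Q i e - Q (i + 1) e)))
        ≤ ∑ i ∈ Finset.range M, ε • (Q i e - Q (i + 1) e) := Finset.sum_le_sum hd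
      _ = ε • ∑ i ∈ Finset.range M, (Q i e - Q (i + 1) e) := by rw [Finset.smul_sum]
      _ = ε • (Q 0 e - Q M e) := by rw [Finset.sum_range_sub' (fun i => Q i e) M]
      _ ≤ ε • e := by
          apply smul_le_smul_of_nonneg_left _ hε.le
          have h7 : Q 0 e ≤ e := by rw [hQe_eq 0]; exact p0_le_self hD _ _
          have h8 : (0:E) ≤ Q M e := by rw [hQe_eq M]; exact p0_nonneg hD he
          calc Q 0 e - Q M e ≤ e - 0 := sub_le_sub h7 h8
            _ = e := sub_zero e

lemma freudenthal {e : E} (he : 0 ≤ e) {f : E} {k : ℝ} (hk0 : 0 ≤ k) (hk : |f| ≤ k • e)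
    {ε : ℝ} (hε : 0 < ε) : ∃ x : E, IsComb e x ∧ |f - x| ≤ ε • e := by
  rcases eq_or_lt_of_le hk0 with h | h
  · have h1 : |f| ≤ 0 := by rw [← h, zero_smul] at hk; exact hk
    rw [abs_def'] at h1
    have h2 : f ≤ 0 := le_trans le_sup_left h1
    have h3 : -f ≤ 0 := le_trans le_sup_right h1
    have hf : f = 0 := le_antisymm h2 (by simpa using h3)
    refine ⟨0, comb_zero e, ?_⟩
    rw [hf, sub_zero, abs_def']
    rw [neg_zero, sup_idem]
    exact smul_nonneg' hε.le he
  · have hfp : (0:E) ≤ k⁻¹ • f⁺ := smul_nonneg' (by positivity) (posPart_nonneg f)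
    have hfple : k⁻¹ • f⁺ ≤ e := by
      have h1 : f⁺ ≤ k • e := le_trans (posPart_le_abs' f) hk
      have h2 := smul_le_smul_of_nonneg_left h1 (inv_nonneg.2 hk0)
      rwa [smul_smul, inv_mul_cancel₀ h.ne', one_smul] at h2
    have hfn : (0:E) ≤ k⁻¹ • f⁻ := smul_nonneg' (by positivity) (negPart_nonneg f)
    have hfnle : k⁻¹ • f⁻ ≤ e := by
      have h1 : f⁻ ≤ k • e := by
        have := negPart_nonneg f
        calc f⁻ ≤ f⁺ + f⁻ := le_add_of_nonneg_left (posPart_nonneg f)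
          _ = |f| := posPart_add_negPart f
          _ ≤ k • e := hk
      have h2 := smul_le_smul_of_nonneg_left h1 (inv_nonneg.2 hk0)
      rwa [smul_smul, inv_mul_cancel₀ h.ne', one_smul] at h2
    have hε2 : 0 < ε / (2 * k) := by positivity
    obtain ⟨x₁, hc₁, hx₁0, hx₁⟩ := freudenthal_step hD hfp hfple hε2
    obtain ⟨x₂, hc₂, hx₂0, hx₂⟩ := freudenthal_step hD hfn hfnle hε2
    refine ⟨k • x₁ - k • x₂, comb_sub (comb_smul hc₁ k) (comb_smul hc₂ k), ?_⟩
    have key : ∀ (g x : E), (0:E) ≤ k⁻¹ • g - x → k⁻¹ • g - x ≤ (ε / (2*k)) • e →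
        |g - k • x| ≤ (ε / 2) • e := by
      intro g x h0 hle
      have h1 : |k⁻¹ • g - x| ≤ (ε / (2*k)) • e := by
        rw [abs_of_nonneg h0]; exact hle
      have h2 := congrArg (fun z => |k • z|) (rfl : k⁻¹ • g - x = k⁻¹ • g - x)
      have h3 : k • (k⁻¹ • g - x) = g - k • x := by
        rw [smul_sub, smul_smul, mul_inv_cancel₀ h.ne', one_smul]
      have h4 : |g - k • x| = k • |k⁻¹ • g - x| := by
        rw [← h3, abs_smul', abs_of_nonneg hk0]
      rw [h4]
      calc k • |k⁻¹ • g - x| ≤ k • ((ε / (2*k)) • e) :=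
            smul_le_smul_of_nonneg_left h1 hk0
        _ = (ε / 2) • e := by
            rw [smul_smul]
            congr 1
            field_simp
    have k1 := key f⁺ x₁ hx₁0 hx₁
    have k2 := key f⁻ x₂ hx₂0 hx₂
    have hdecomp : f - (k • x₁ - k • x₂) = (f⁺ - k • x₁) - (f⁻ - k • x₂) := by
      have hd2 : (f⁺ - k • x₁) - (f⁻ - k • x₂) = (f⁺ - f⁻) - (k • x₁ - k • x₂) := by abel
      rw [hd2, posPart_sub_negPart]
    rw [hdecomp]
    have habs : |(f⁺ - k • x₁) - (f⁻ - k • x₂)| ≤ |f⁺ - k • x₁| + |f⁻ - k • x₂| := by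
      have h5 := abs_add_le (f⁺ - k • x₁) (-(f⁻ - k • x₂))
      rw [abs_neg] at h5
      simpa [sub_eq_add_neg] using h5
    calc |(f⁺ - k • x₁) - (f⁻ - k • x₂)| ≤ |f⁺ - k • x₁| + |f⁻ - k • x₂| := habs
      _ ≤ (ε / 2) • e + (ε / 2) • e := add_le_add k1 k2
      _ = ε • e := by rw [← add_smul]; norm_num

end Freudenthal


section OrderConvLemmas

variable (hD : DedekindCompleteIn (Set.univ : Set E))

omit hD in
lemma orderConv_p_nonneg {p : ℕ → E} (hG : IsGLB (Set.range p) 0) (n : ℕ) : 0 ≤ p n :=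
  hG.1 ⟨n, rfl⟩

omit hD in
lemma orderConv_const_zero : OrderConv (fun _ : ℕ => (0 : E)) 0 := by
  refine ⟨fun _ => 0, fun _ _ _ => le_rfl, ?_, fun n => by simp⟩
  constructor
  · rintro x ⟨n, rfl⟩; exact le_rfl
  · intro b hb; exact hb ⟨0, rfl⟩

omit hD in
lemma isGLB_add_zero {p q : ℕ → E} (hp1 : Antitone p) (hp2 : IsGLB (Set.range p) 0)
    (hq1 : Antitone q) (hq2 : IsGLB (Set.range q) 0) :
    IsGLB (Set.range fun n => p n + q n) 0 := by
  constructor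
  · rintro x ⟨n, rfl⟩
    exact add_nonneg (orderConv_p_nonneg hp2 n) (orderConv_p_nonneg hq2 n)
  · intro b hb
    have h1 : ∀ n, b - p n ≤ 0 := by
      intro n
      have h2 : b - p n ∈ lowerBounds (Set.range q) := by
        rintro x ⟨m, rfl⟩
        rcases le_total n m with h | h
        · have := hb ⟨m, rfl⟩
          have h3 : p m ≤ p n := hp1 h
          have h4 : b ≤ p m + q m := this
          calc b - p n ≤ b - p m := sub_le_sub_left h3 b
            _ ≤ q m := by
              rw [sub_le_iff_le_add, add_comm]; exact h4
        · have h4 : b ≤ p n + q n := hb ⟨n, rfl⟩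
          have h5 : q n ≤ q m := hq1 h
          calc b - p n ≤ q n := by rw [sub_le_iff_le_add, add_comm]; exact h4
            _ ≤ q m := h5
      exact hq2.2 h2
    have h2 : b ∈ lowerBounds (Set.range p) := by
      rintro x ⟨n, rfl⟩
      exact sub_nonpos.1 (h1 n)
    exact hp2.2 h2

omit hD in
lemma orderConv_add_zero {u v : ℕ → E} (hu : OrderConv u 0) (hv : OrderConv v 0) :
    OrderConv (fun n => u n + v n) 0 := by
  obtain ⟨p, hp1, hp2, hp3⟩ := hu
  obtain ⟨q, hq1, hq2, hq3⟩ := hv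
  refine ⟨fun n => p n + q n, fun a b hab => add_le_add (hp1 hab) (hq1 hab),
    isGLB_add_zero hp1 hp2 hq1 hq2, fun n => ?_⟩
  rw [sub_zero]
  calc |u n + v n| ≤ |u n| + |v n| := abs_add_le _ _
    _ ≤ p n + q n := by
      have h1 := hp3 n; have h2 := hq3 n
      rw [sub_zero] at h1 h2
      exact add_le_add h1 h2

omit hD in
lemma orderConv_smul_zero {u : ℕ → E} (hu : OrderConv u 0) (r : ℝ) :
    OrderConv (fun n => r • u n) 0 := by
  obtain ⟨p, hp1, hp2, hp3⟩ := hu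
  rcases eq_or_ne r 0 with h | h
  · simp only [h, zero_smul]
    exact orderConv_const_zero
  · have hr : 0 < |r| := abs_pos.2 h
    refine ⟨fun n => |r| • p n, fun a b hab => smul_le_smul_of_nonneg_left (hp1 hab) hr.le,
      ?_, fun n => ?_⟩
    · constructor
      · rintro x ⟨n, rfl⟩
        exact smul_nonneg' hr.le (orderConv_p_nonneg hp2 n)
      · intro b hb
        have h1 : |r|⁻¹ • b ∈ lowerBounds (Set.range p) := by
          rintro x ⟨n, rfl⟩
          have h2 := hb ⟨n, rfl⟩
          have h3 := smul_le_smul_of_nonneg_left h2 (inv_nonneg.2 hr.le)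
          rwa [smul_smul, inv_mul_cancel₀ hr.ne', one_smul] at h3
        have h4 := hp2.2 h1
        have h5 := smul_le_smul_of_nonneg_left h4 hr.le
        rwa [smul_smul, mul_inv_cancel₀ hr.ne', one_smul, smul_zero] at h5
    · rw [sub_zero, abs_smul']
      have h1 := hp3 n
      rw [sub_zero] at h1
      exact smul_le_smul_of_nonneg_left h1 hr.le

omit hD in
lemma orderConv_dominated {u v : ℕ → E} (hv : OrderConv v 0) (h : ∀ n, |u n| ≤ v n) :
    OrderConv u 0 := by
  obtain ⟨p, hp1, hp2, hp3⟩ := hv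
  refine ⟨p, hp1, hp2, fun n => ?_⟩
  rw [sub_zero]
  have h1 := hp3 n
  rw [sub_zero] at h1
  exact le_trans (h n) (le_trans (le_trans (le_sup_left : v n ≤ |v n|) le_rfl) h1)

include hD in
/-- ε-approximation criterion for order convergence to `0`. -/
lemma orderConv_of_eps {e : E} (he : 0 ≤ e) {u : ℕ → E} (hu0 : ∀ n, 0 ≤ u n)
    (H : ∀ ε : ℝ, 0 < ε → ∃ v : ℕ → E, OrderConv v 0 ∧ ∀ n, u n ≤ v n + ε • e) :
    OrderConv u 0 := by
  have H' : ∀ j : ℕ, ∃ p : ℕ → E, Antitone p ∧ IsGLB (Set.range p) 0 ∧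
      ∀ n, u n ≤ p n + (1 / ((j : ℝ) + 1)) • e := by
    intro j
    obtain ⟨v, ⟨p, hp1, hp2, hp3⟩, hv⟩ := H (1 / ((j : ℝ) + 1)) (by positivity)
    refine ⟨p, hp1, hp2, fun n => ?_⟩
    have h1 : v n ≤ p n := by
      have h2 := hp3 n
      rw [sub_zero] at h2
      exact le_trans (le_sup_left : v n ≤ |v n|) h2
    exact le_trans (hv n) (add_le_add_left h1 _)
  choose p hA hG hB using H'
  set q : ℕ → E := fun n => Finset.inf' (Finset.range (n + 1)) (by simp)
    (fun j => p j n + (1 / ((j : ℝ) + 1)) • e) with hq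
  have hqle : ∀ n j, j ≤ n → q n ≤ p j n + (1 / ((j : ℝ) + 1)) • e := by
    intro n j hj
    exact Finset.inf'_le _ (Finset.mem_range.2 (by omega))
  refine ⟨q, ?_, ?_, ?_⟩
  · intro a b hab
    apply Finset.le_inf'
    intro j hj
    have hj' : j ≤ a := by
      have := Finset.mem_range.1 hj; omega
    calc q b ≤ p j b + (1 / ((j : ℝ) + 1)) • e := hqle b j (by omega)
      _ ≤ p j a + (1 / ((j : ℝ) + 1)) • e := add_le_add_left (hA j hab) _
  · constructor
    · rintro x ⟨n, rfl⟩
      apply Finset.le_inf'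
      intro j _
      exact add_nonneg (orderConv_p_nonneg (hG j) n) (smul_nonneg' (by positivity) he)
    · intro b hb
      have key : ∀ j : ℕ, b ≤ (1 / ((j : ℝ) + 1)) • e := by
        intro j
        have h1 : b - (1 / ((j : ℝ) + 1)) • e ∈ lowerBounds (Set.range (p j)) := by
          rintro x ⟨n, rfl⟩
          have h2 : b ≤ p j (max n j) + (1 / ((j : ℝ) + 1)) • e :=
            le_trans (hb ⟨max n j, rfl⟩) (hqle _ j (le_max_right n j))
          have h3 : p j (max n j) ≤ p j n := hA j (le_max_left n j)
          have h4 : b - (1 / ((j : ℝ) + 1)) • e ≤ p j (max n j) := by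
            rw [sub_le_iff_le_add]; exact h2
          exact le_trans h4 h3
        have h5 := (hG j).2 h1
        rw [sub_le_iff_le_add, zero_add] at h5
        exact h5
      set c : E := b ⊔ 0 with hc
      have hc0 : 0 ≤ c := le_sup_right
      have hce : ∀ n : ℕ, (n : ℝ) • c ≤ e := by
        intro n
        rcases Nat.eq_zero_or_pos n with h | h
        · rw [h]; simp [he]
        · have h1 : c ≤ (1 / (n : ℝ)) • e := by
            have h2 := key (n - 1)
            have h3 : ((n - 1 : ℕ) : ℝ) + 1 = (n : ℝ) := by
              have : 1 ≤ n := h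
              push_cast [Nat.cast_sub this]
              ring
            rw [h3] at h2
            refine sup_le h2 (smul_nonneg' (by positivity) he)
          have h4 := smul_le_smul_of_nonneg_left h1 (Nat.cast_nonneg n : (0:ℝ) ≤ n)
          rw [smul_smul] at h4
          have h5 : (n : ℝ) * (1 / (n : ℝ)) = 1 := by
            field_simp
          rwa [h5, one_smul] at h4
      have h6 := arch_le_zero hD hc0 he hce
      exact le_trans (le_sup_left : b ≤ c) h6
  · intro n
    rw [sub_zero]
    have h1 : |u n| = u n := by
      rw [abs_def']
      exact sup_eq_left.2 (le_trans (neg_nonpos_of_nonneg (hu0 n)) (hu0 n))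
    rw [h1]
    apply Finset.le_inf'
    intro j _
    exact hB j n

end OrderConvLemmas

section OpLemmas

variable {T S : E →ₗ[ℝ] E} {e : E}

lemma S_abs (hS : IsRieszHom S) (x : E) : S |x| = |S x| := by
  rw [abs_def', abs_def', hS x (-x), map_neg]

lemma S_pos (hS : IsRieszHom S) {x : E} (hx : 0 ≤ x) : 0 ≤ S x := by
  have h1 : |x| = x := abs_of_nonneg hx
  have h2 : S x = |S x| := by conv_lhs => rw [← h1, S_abs hS]
  rw [h2]; exact abs_nonneg _

lemma S_mono (hS : IsRieszHom S) {x y : E} (h : x ≤ y) : S x ≤ S y := by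
  have h1 : 0 ≤ S (y - x) := S_pos hS (sub_nonneg.2 h)
  rw [map_sub] at h1
  exact sub_nonneg.1 h1

lemma Sk_riesz (hS : IsRieszHom S) (k : ℕ) : IsRieszHom (S ^ k) := by
  induction k with
  | zero => intro f g; simp
  | succ n ih =>
    intro f g
    rw [pow_succ, Module.End.mul_apply, Module.End.mul_apply, Module.End.mul_apply, hS, ih]

lemma Sk_e (hSe : S e = e) (k : ℕ) : (S ^ k) e = e := by
  induction k with
  | zero => simp
  | succ n ih => rw [pow_succ, Module.End.mul_apply, hSe, ih]

lemma T_mono (hT : ∀ x : E, 0 ≤ x → 0 ≤ T x) {x y : E} (h : x ≤ y) : T x ≤ T y := by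
  have h1 : 0 ≤ T (y - x) := hT _ (sub_nonneg.2 h)
  rw [map_sub] at h1
  exact sub_nonneg.1 h1

lemma T_abs_le (hT : ∀ x : E, 0 ≤ x → 0 ≤ T x) (x : E) : |T x| ≤ T |x| := by
  rw [abs_def']
  apply sup_le
  · exact T_mono hT (le_sup_left : x ≤ |x|)
  · rw [← map_neg]
    exact T_mono hT (le_sup_right : -x ≤ |x|)

-- idealE lemmas
lemma ideal_mem_of_le {x : E} {k : ℝ} (hk : 0 ≤ k) (h : |x| ≤ k • e) : x ∈ idealE e :=
  ⟨k, hk, h⟩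

lemma ideal_zero (he : 0 ≤ e) : (0 : E) ∈ idealE e :=
  ⟨0, le_rfl, by simp⟩

lemma ideal_e (he : 0 ≤ e) : e ∈ idealE e :=
  ⟨1, zero_le_one, by rw [one_smul]; rw [abs_of_nonneg he]⟩

lemma ideal_smul {x : E} (hx : x ∈ idealE e) (r : ℝ) : r • x ∈ idealE e := by
  obtain ⟨k, hk0, hk⟩ := hx
  refine ⟨|r| * k, by positivity, ?_⟩
  rw [abs_smul', ← smul_smul]
  exact smul_le_smul_of_nonneg_left hk (abs_nonneg r)

lemma ideal_add {x y : E} (hx : x ∈ idealE e) (hy : y ∈ idealE e) : x + y ∈ idealE e := by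
  obtain ⟨k, hk0, hk⟩ := hx
  obtain ⟨l, hl0, hl⟩ := hy
  refine ⟨k + l, by positivity, ?_⟩
  calc |x + y| ≤ |x| + |y| := abs_add_le x y
    _ ≤ k • e + l • e := add_le_add hk hl
    _ = (k + l) • e := (add_smul k l e).symm

lemma ideal_neg {x : E} (hx : x ∈ idealE e) : -x ∈ idealE e := by
  have := ideal_smul hx (-1)
  simpa using this

lemma ideal_sub {x y : E} (hx : x ∈ idealE e) (hy : y ∈ idealE e) : x - y ∈ idealE e := by
  rw [sub_eq_add_neg]
  exact ideal_add hx (ideal_neg hy)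

lemma ideal_abs {x : E} (hx : x ∈ idealE e) : |x| ∈ idealE e := by
  obtain ⟨k, hk0, hk⟩ := hx
  exact ⟨k, hk0, by rwa [abs_abs]⟩

lemma ideal_posPart {x : E} (hx : x ∈ idealE e) : x⁺ ∈ idealE e := by
  obtain ⟨k, hk0, hk⟩ := hx
  refine ⟨k, hk0, ?_⟩
  rw [abs_of_nonneg (posPart_nonneg x)]
  exact le_trans (posPart_le_abs' x) hk

lemma ideal_negPart {x : E} (hx : x ∈ idealE e) : x⁻ ∈ idealE e := by
  rw [← posPart_neg]
  exact ideal_posPart (ideal_neg hx)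

lemma ideal_smul_e (he : 0 ≤ e) (r : ℝ) : r • e ∈ idealE e :=
  ideal_smul (ideal_e he) r

lemma ideal_bp (he : 0 ≤ e) {P : E →ₗ[ℝ] E} (hP : IsBandProjection P) : P e ∈ idealE e := by
  obtain ⟨hPe0, hPee⟩ := hP.2 e he
  exact ⟨1, zero_le_one, by rw [one_smul, abs_of_nonneg hPe0]; exact hPee⟩

lemma ideal_comb (he : 0 ≤ e) {x : E} (hx : IsComb e x) : x ∈ idealE e := by
  obtain ⟨M, a, P, hP, rfl⟩ := hx
  refine Finset.sum_induction _ (· ∈ idealE e) (fun _ _ => ideal_add) (ideal_zero he) ?_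
  intro i _
  exact ideal_smul (ideal_bp he (hP i)) (a i)

lemma ideal_Sk (hS : IsRieszHom S) (hSe : S e = e) {x : E} (hx : x ∈ idealE e) (k : ℕ) :
    (S ^ k) x ∈ idealE e := by
  obtain ⟨c, hc0, hc⟩ := hx
  refine ⟨c, hc0, ?_⟩
  rw [← S_abs (Sk_riesz hS k)]
  calc (S ^ k) |x| ≤ (S ^ k) (c • e) := S_mono (Sk_riesz hS k) hc
    _ = c • (S ^ k) e := map_smul _ _ _
    _ = c • e := by rw [Sk_e hSe k]

lemma abs_Sk_le (hS : IsRieszHom S) (hSe : S e = e) {x : E} {c : ℝ} (h : |x| ≤ c • e)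
    (k : ℕ) : |(S ^ k) x| ≤ c • e := by
  rw [← S_abs (Sk_riesz hS k)]
  calc (S ^ k) |x| ≤ (S ^ k) (c • e) := S_mono (Sk_riesz hS k) h
    _ = c • (S ^ k) e := map_smul _ _ _
    _ = c • e := by rw [Sk_e hSe k]

lemma ideal_T (hT : ∀ x : E, 0 ≤ x → 0 ≤ T x) {x : E} (hx : x ∈ idealE e)
    (hTe : T e = e) : T x ∈ idealE e := by
  obtain ⟨c, hc0, hc⟩ := hx
  refine ⟨c, hc0, ?_⟩
  calc |T x| ≤ T |x| := T_abs_le hT x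
    _ ≤ T (c • e) := T_mono hT hc
    _ = c • T e := map_smul _ _ _
    _ = c • e := by rw [hTe]

lemma abs_T_le_const (hT : ∀ x : E, 0 ≤ x → 0 ≤ T x) (hTe : T e = e) {x : E} {c : ℝ}
    (h : |x| ≤ c • e) : |T x| ≤ c • e := by
  calc |T x| ≤ T |x| := T_abs_le hT x
    _ ≤ T (c • e) := T_mono hT h
    _ = c • T e := map_smul _ _ _
    _ = c • e := by rw [hTe]

end OpLemmas

section MulLemmas

variable {e : E} {m : E → E → E}

lemma m_zero_left (hm : IsFAlgMulOn e m) (he : 0 ≤ e) {g : E} (hg : g ∈ idealE e) :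
    m 0 g = 0 := by
  have h1 := hm.2.2.2.1 0 0 (ideal_zero he) g hg
  rw [zero_smul, zero_smul] at h1
  exact h1

lemma m_smul_left (hm : IsFAlgMulOn e m) (r : ℝ) {f g : E} (hf : f ∈ idealE e)
    (hg : g ∈ idealE e) : m (r • f) g = r • m f g := hm.2.2.2.1 r f hf g hg

lemma m_add_left (hm : IsFAlgMulOn e m) {f f' g : E} (hf : f ∈ idealE e)
    (hf' : f' ∈ idealE e) (hg : g ∈ idealE e) : m (f + f') g = m f g + m f' g :=
  hm.2.2.1 f hf f' hf' g hg

lemma m_sub_left (hm : IsFAlgMulOn e m) {f f' g : E} (hf : f ∈ idealE e)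
    (hf' : f' ∈ idealE e) (hg : g ∈ idealE e) : m (f - f') g = m f g - m f' g := by
  have h1 : f - f' = f + (-1 : ℝ) • f' := by simp [sub_eq_add_neg]
  rw [h1, m_add_left hm hf (ideal_smul hf' (-1)) hg, m_smul_left hm (-1) hf' hg]
  simp [sub_eq_add_neg]

lemma m_comm (hm : IsFAlgMulOn e m) {f g : E} (hf : f ∈ idealE e) (hg : g ∈ idealE e) :
    m f g = m g f := hm.2.1 f hf g hg

lemma m_add_right (hm : IsFAlgMulOn e m) {f g g' : E} (hf : f ∈ idealE e)
    (hg : g ∈ idealE e) (hg' : g' ∈ idealE e) : m f (g + g') = m f g + m f g' := by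
  rw [m_comm hm hf (ideal_add hg hg'), m_add_left hm hg hg' hf,
    m_comm hm hg hf, m_comm hm hg' hf]

lemma m_sub_right (hm : IsFAlgMulOn e m) {f g g' : E} (hf : f ∈ idealE e)
    (hg : g ∈ idealE e) (hg' : g' ∈ idealE e) : m f (g - g') = m f g - m f g' := by
  rw [m_comm hm hf (ideal_sub hg hg'), m_sub_left hm hg hg' hf,
    m_comm hm hg hf, m_comm hm hg' hf]

lemma m_smul_right (hm : IsFAlgMulOn e m) (r : ℝ) {f g : E} (hf : f ∈ idealE e)
    (hg : g ∈ idealE e) : m f (r • g) = r • m f g := by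
  rw [m_comm hm hf (ideal_smul hg r), m_smul_left hm r hg hf, m_comm hm hg hf]

lemma m_zero_right (hm : IsFAlgMulOn e m) (he : 0 ≤ e) {f : E} (hf : f ∈ idealE e) :
    m f 0 = 0 := by
  rw [m_comm hm hf (ideal_zero he), m_zero_left hm he hf]

lemma m_nonneg (hm : IsFAlgMulOn e m) {f g : E} (hf : f ∈ idealE e) (hg : g ∈ idealE e)
    (hf0 : 0 ≤ f) (hg0 : 0 ≤ g) : 0 ≤ m f g := hm.2.2.2.2.1 f hf g hg hf0 hg0

lemma m_mono_pair (hm : IsFAlgMulOn e m) {a a' b b' : E} (ha : a ∈ idealE e)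
    (ha' : a' ∈ idealE e) (hb : b ∈ idealE e) (hb' : b' ∈ idealE e)
    (h0a : 0 ≤ a) (h0b : 0 ≤ b) (haa : a ≤ a') (hbb : b ≤ b') :
    m a b ≤ m a' b' := by
  have h1 : m a' b - m a b = m (a' - a) b := (m_sub_left hm ha' ha hb).symm
  have h2 : 0 ≤ m (a' - a) b := m_nonneg hm (ideal_sub ha' ha) hb (sub_nonneg.2 haa) h0b
  have h3 : m a b ≤ m a' b := by
    have := sub_nonneg.1 (h1 ▸ h2)
    exact this
  have h4 : m a' b' - m a' b = m a' (b' - b) := (m_sub_right hm ha' hb' hb).symm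
  have h5 : 0 ≤ m a' (b' - b) :=
    m_nonneg hm ha' (ideal_sub hb' hb) (le_trans h0a haa) (sub_nonneg.2 hbb)
  have h6 : m a' b ≤ m a' b' := by
    have := sub_nonneg.1 (h4 ▸ h5)
    exact this
  exact le_trans h3 h6

lemma m_abs_le (hm : IsFAlgMulOn e m) {f g : E} (hf : f ∈ idealE e) (hg : g ∈ idealE e) :
    |m f g| ≤ m |f| |g| := by
  have hfp := ideal_posPart hf
  have hfn := ideal_negPart hf
  have hgp := ideal_posPart hg
  have hgn := ideal_negPart hg
  set A := m f⁺ g⁺ with hA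
  set B := m f⁻ g⁺ with hB
  set C := m f⁺ g⁻ with hC
  set D := m f⁻ g⁻ with hDd
  have hA0 : 0 ≤ A := m_nonneg hm hfp hgp (posPart_nonneg f) (posPart_nonneg g)
  have hB0 : 0 ≤ B := m_nonneg hm hfn hgp (negPart_nonneg f) (posPart_nonneg g)
  have hC0 : 0 ≤ C := m_nonneg hm hfp hgn (posPart_nonneg f) (negPart_nonneg g)
  have hD0 : 0 ≤ D := m_nonneg hm hfn hgn (negPart_nonneg f) (negPart_nonneg g)
  have hsplit : m f g = A - B - C + D := by
    have h1 : f = f⁺ - f⁻ := (posPart_sub_negPart f).symm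
    have h2 : g = g⁺ - g⁻ := (posPart_sub_negPart g).symm
    calc m f g = m (f⁺ - f⁻) g := by rw [← h1]
      _ = m f⁺ g - m f⁻ g := m_sub_left hm hfp hfn hg
      _ = (m f⁺ (g⁺ - g⁻)) - (m f⁻ (g⁺ - g⁻)) := by rw [← h2]
      _ = (A - C) - (B - D) := by
          rw [m_sub_right hm hfp hgp hgn, m_sub_right hm hfn hgp hgn]
      _ = A - B - C + D := by abel
  have habs : m |f| |g| = A + B + C + D := by
    have h1 : |f| = f⁺ + f⁻ := (posPart_add_negPart f).symm
    have h2 : |g| = g⁺ + g⁻ := (posPart_add_negPart g).symm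
    calc m |f| |g| = m (f⁺ + f⁻) |g| := by rw [← h1]
      _ = m f⁺ |g| + m f⁻ |g| := m_add_left hm hfp hfn (ideal_abs hg)
      _ = (m f⁺ (g⁺ + g⁻)) + (m f⁻ (g⁺ + g⁻)) := by rw [← h2]
      _ = (A + C) + (B + D) := by
          rw [m_add_right hm hfp hgp hgn, m_add_right hm hfn hgp hgn]
      _ = A + B + C + D := by abel
  rw [hsplit, habs, abs_def']
  apply sup_le
  · have : A - B - C + D ≤ A + B + C + D := by
      have hB' : -B ≤ B := le_trans (neg_nonpos_of_nonneg hB0) hB0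
      have hC' : -C ≤ C := le_trans (neg_nonpos_of_nonneg hC0) hC0
      calc A - B - C + D = A + (-B) + (-C) + D := by abel
        _ ≤ A + B + C + D := by
          apply add_le_add_left
          exact add_le_add (add_le_add_right hB' A) hC'
    exact this
  · have : -(A - B - C + D) ≤ A + B + C + D := by
      have hA' : -A ≤ A := le_trans (neg_nonpos_of_nonneg hA0) hA0
      have hD' : -D ≤ D := le_trans (neg_nonpos_of_nonneg hD0) hD0
      calc -(A - B - C + D) = (-A) + B + C + (-D) := by abel
        _ ≤ A + B + C + D := by
          exact add_le_add (add_le_add_left (add_le_add_left hA' B) C) hD'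
    exact this

lemma m_unit (hm : IsFAlgMulOn e m) {f : E} (hf : f ∈ idealE e) : m e f = f :=
  hm.2.2.2.2.2.1 f hf

lemma m_scal (hm : IsFAlgMulOn e m) (he : 0 ≤ e) (a b : ℝ) :
    m (a • e) (b • e) = (a * b) • e := by
  rw [m_smul_left hm a (ideal_e he) (ideal_smul_e he b), m_unit hm (ideal_smul_e he b),
    smul_smul]

end MulLemmas

section Main

/-- The sequence of Cesàro means of `|T((S^k x)·y) − Tx·Ty|`. -/
noncomputable def Dseq (T S : E →ₗ[ℝ] E) (m : E → E → E) (x y : E) : ℕ → E :=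
  fun n => (n : ℝ)⁻¹ • ∑ k ∈ Finset.range n, |T (m ((S ^ k) x) y) - m (T x) (T y)|

lemma Dseq_nonneg (T S : E →ₗ[ℝ] E) (m : E → E → E) (x y : E) (n : ℕ) :
    0 ≤ Dseq T S m x y n := by
  apply smul_nonneg' (by positivity)
  apply Finset.sum_nonneg
  intro k _
  exact abs_nonneg _

lemma abs_Dseq (T S : E →ₗ[ℝ] E) (m : E → E → E) (x y : E) (n : ℕ) :
    |Dseq T S m x y n| = Dseq T S m x y n :=
  abs_of_nonneg (Dseq_nonneg T S m x y n)

lemma cesaro_le {a b : ℕ → E} (h : ∀ k, a k ≤ b k) (n : ℕ) :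
    (n : ℝ)⁻¹ • ∑ k ∈ Finset.range n, a k ≤ (n : ℝ)⁻¹ • ∑ k ∈ Finset.range n, b k :=
  smul_le_smul_of_nonneg_left (Finset.sum_le_sum fun k _ => h k) (by positivity)

lemma cesaro_add (a b : ℕ → E) (n : ℕ) :
    (n : ℝ)⁻¹ • ∑ k ∈ Finset.range n, (a k + b k) =
      (n : ℝ)⁻¹ • ∑ k ∈ Finset.range n, a k + (n : ℝ)⁻¹ • ∑ k ∈ Finset.range n, b k := by
  rw [Finset.sum_add_distrib, smul_add]

lemma cesaro_const_le {c : E} (hc : 0 ≤ c) (n : ℕ) :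
    (n : ℝ)⁻¹ • ∑ _k ∈ Finset.range n, c ≤ c := by
  rcases Nat.eq_zero_or_pos n with h | h
  · rw [h]; simpa using hc
  · rw [Finset.sum_const, Finset.card_range, ← Nat.cast_smul_eq_nsmul ℝ, smul_smul,
      inv_mul_cancel₀ (by exact_mod_cast h.ne' : (n:ℝ) ≠ 0), one_smul]

variable {T S : E →ₗ[ℝ] E} {e : E} {m : E → E → E}

lemma good_zero_left (hm : IsFAlgMulOn e m) (he : 0 ≤ e)
    (hT : ∀ x : E, 0 ≤ x → 0 ≤ T x) (hTe : T e = e) {y : E} (hy : y ∈ idealE e) :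
    OrderConv (Dseq T S m 0 y) 0 := by
  apply orderConv_dominated orderConv_const_zero
  intro n
  have h1 : Dseq T S m 0 y n = 0 := by
    show (n : ℝ)⁻¹ • ∑ k ∈ Finset.range n, |T (m ((S ^ k) (0:E)) y) - m (T 0) (T y)| = 0
    rw [Finset.sum_eq_zero, smul_zero]
    intro k _
    rw [map_zero, map_zero, m_zero_left hm he hy, m_zero_left hm he (ideal_T hT hy hTe),
      map_zero, sub_zero]
    exact abs_zero
  rw [h1]
  rw [abs_zero]

lemma good_add_left (hm : IsFAlgMulOn e m) (he : 0 ≤ e)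
    (hT : ∀ x : E, 0 ≤ x → 0 ≤ T x) (hTe : T e = e)
    (hS : IsRieszHom S) (hSe : S e = e)
    {x x' y : E} (hx : x ∈ idealE e) (hx' : x' ∈ idealE e) (hy : y ∈ idealE e)
    (h1 : OrderConv (Dseq T S m x y) 0) (h2 : OrderConv (Dseq T S m x' y) 0) :
    OrderConv (Dseq T S m (x + x') y) 0 := by
  apply orderConv_dominated (orderConv_add_zero h1 h2)
  intro n
  rw [abs_Dseq]
  have hpt : ∀ k, |T (m ((S ^ k) (x + x')) y) - m (T (x + x')) (T y)| ≤
      |T (m ((S ^ k) x) y) - m (T x) (T y)| + |T (m ((S ^ k) x') y) - m (T x') (T y)| := by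
    intro k
    have hterm : T (m ((S ^ k) (x + x')) y) - m (T (x + x')) (T y) =
        (T (m ((S ^ k) x) y) - m (T x) (T y)) + (T (m ((S ^ k) x') y) - m (T x') (T y)) := by
      have e1 : (S ^ k) (x + x') = (S ^ k) x + (S ^ k) x' := map_add _ _ _
      have e2 : T (x + x') = T x + T x' := map_add _ _ _
      rw [e1, m_add_left hm (ideal_Sk hS hSe hx k) (ideal_Sk hS hSe hx' k) hy, map_add, e2,
        m_add_left hm (ideal_T hT hx hTe) (ideal_T hT hx' hTe) (ideal_T hT hy hTe)]
      abel
    rw [hterm]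
    exact abs_add_le _ _
  calc Dseq T S m (x + x') y n
      ≤ (n : ℝ)⁻¹ • ∑ k ∈ Finset.range n,
        (|T (m ((S ^ k) x) y) - m (T x) (T y)| + |T (m ((S ^ k) x') y) - m (T x') (T y)|) :=
        cesaro_le hpt n
    _ = Dseq T S m x y n + Dseq T S m x' y n := cesaro_add _ _ n

lemma good_smul_left (hm : IsFAlgMulOn e m) (he : 0 ≤ e)
    (hT : ∀ x : E, 0 ≤ x → 0 ≤ T x) (hTe : T e = e)
    (hS : IsRieszHom S) (hSe : S e = e)
    {x y : E} (r : ℝ) (hx : x ∈ idealE e) (hy : y ∈ idealE e)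
    (h1 : OrderConv (Dseq T S m x y) 0) :
    OrderConv (Dseq T S m (r • x) y) 0 := by
  apply orderConv_dominated (orderConv_smul_zero h1 |r|)
  intro n
  rw [abs_Dseq]
  have hpt : ∀ k, |T (m ((S ^ k) (r • x)) y) - m (T (r • x)) (T y)| ≤
      |r| • |T (m ((S ^ k) x) y) - m (T x) (T y)| := by
    intro k
    have hterm : T (m ((S ^ k) (r • x)) y) - m (T (r • x)) (T y) =
        r • (T (m ((S ^ k) x) y) - m (T x) (T y)) := by
      have e1 : (S ^ k) (r • x) = r • (S ^ k) x := map_smul _ _ _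
      have e2 : T (r • x) = r • T x := map_smul _ _ _
      rw [e1, m_smul_left hm r (ideal_Sk hS hSe hx k) hy, map_smul, e2,
        m_smul_left hm r (ideal_T hT hx hTe) (ideal_T hT hy hTe), smul_sub]
    rw [hterm, abs_smul']
  calc Dseq T S m (r • x) y n
      ≤ (n : ℝ)⁻¹ • ∑ k ∈ Finset.range n,
        |r| • |T (m ((S ^ k) x) y) - m (T x) (T y)| := cesaro_le hpt n
    _ = |r| • Dseq T S m x y n := by
        rw [← Finset.smul_sum, Dseq, smul_comm]

lemma good_zero_right (hm : IsFAlgMulOn e m) (he : 0 ≤ e)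
    (hT : ∀ x : E, 0 ≤ x → 0 ≤ T x) (hTe : T e = e)
    (hS : IsRieszHom S) (hSe : S e = e) {x : E} (hx : x ∈ idealE e) :
    OrderConv (Dseq T S m x 0) 0 := by
  apply orderConv_dominated orderConv_const_zero
  intro n
  have h1 : Dseq T S m x 0 n = 0 := by
    show (n : ℝ)⁻¹ • ∑ k ∈ Finset.range n, |T (m ((S ^ k) x) (0:E)) - m (T x) (T 0)| = 0
    rw [Finset.sum_eq_zero, smul_zero]
    intro k _
    rw [map_zero, m_zero_right hm he (ideal_Sk hS hSe hx k),
      m_zero_right hm he (ideal_T hT hx hTe), map_zero, sub_zero]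
    exact abs_zero
  rw [h1, abs_zero]

lemma good_add_right (hm : IsFAlgMulOn e m) (he : 0 ≤ e)
    (hT : ∀ x : E, 0 ≤ x → 0 ≤ T x) (hTe : T e = e)
    (hS : IsRieszHom S) (hSe : S e = e)
    {x y y' : E} (hx : x ∈ idealE e) (hy : y ∈ idealE e) (hy' : y' ∈ idealE e)
    (h1 : OrderConv (Dseq T S m x y) 0) (h2 : OrderConv (Dseq T S m x y') 0) :
    OrderConv (Dseq T S m x (y + y')) 0 := by
  apply orderConv_dominated (orderConv_add_zero h1 h2)
  intro n
  rw [abs_Dseq]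
  have hpt : ∀ k, |T (m ((S ^ k) x) (y + y')) - m (T x) (T (y + y'))| ≤
      |T (m ((S ^ k) x) y) - m (T x) (T y)| + |T (m ((S ^ k) x) y') - m (T x) (T y')| := by
    intro k
    have hterm : T (m ((S ^ k) x) (y + y')) - m (T x) (T (y + y')) =
        (T (m ((S ^ k) x) y) - m (T x) (T y)) + (T (m ((S ^ k) x) y') - m (T x) (T y')) := by
      have e2 : T (y + y') = T y + T y' := map_add _ _ _
      rw [m_add_right hm (ideal_Sk hS hSe hx k) hy hy', map_add, e2,
        m_add_right hm (ideal_T hT hx hTe) (ideal_T hT hy hTe) (ideal_T hT hy' hTe)]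
      abel
    rw [hterm]
    exact abs_add_le _ _
  calc Dseq T S m x (y + y') n
      ≤ (n : ℝ)⁻¹ • ∑ k ∈ Finset.range n,
        (|T (m ((S ^ k) x) y) - m (T x) (T y)| + |T (m ((S ^ k) x) y') - m (T x) (T y')|) :=
        cesaro_le hpt n
    _ = Dseq T S m x y n + Dseq T S m x y' n := cesaro_add _ _ n

lemma good_smul_right (hm : IsFAlgMulOn e m) (he : 0 ≤ e)
    (hT : ∀ x : E, 0 ≤ x → 0 ≤ T x) (hTe : T e = e)
    (hS : IsRieszHom S) (hSe : S e = e)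
    {x y : E} (r : ℝ) (hx : x ∈ idealE e) (hy : y ∈ idealE e)
    (h1 : OrderConv (Dseq T S m x y) 0) :
    OrderConv (Dseq T S m x (r • y)) 0 := by
  apply orderConv_dominated (orderConv_smul_zero h1 |r|)
  intro n
  rw [abs_Dseq]
  have hpt : ∀ k, |T (m ((S ^ k) x) (r • y)) - m (T x) (T (r • y))| ≤
      |r| • |T (m ((S ^ k) x) y) - m (T x) (T y)| := by
    intro k
    have hterm : T (m ((S ^ k) x) (r • y)) - m (T x) (T (r • y)) =
        r • (T (m ((S ^ k) x) y) - m (T x) (T y)) := by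
      have e2 : T (r • y) = r • T y := map_smul _ _ _
      rw [m_smul_right hm r (ideal_Sk hS hSe hx k) hy, map_smul, e2,
        m_smul_right hm r (ideal_T hT hx hTe) (ideal_T hT hy hTe), smul_sub]
    rw [hterm, abs_smul']
  calc Dseq T S m x (r • y) n
      ≤ (n : ℝ)⁻¹ • ∑ k ∈ Finset.range n,
        |r| • |T (m ((S ^ k) x) y) - m (T x) (T y)| := cesaro_le hpt n
    _ = |r| • Dseq T S m x y n := by
        rw [← Finset.smul_sum, Dseq, smul_comm]

lemma good_comb (hm : IsFAlgMulOn e m) (he : 0 ≤ e)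
    (hT : ∀ x : E, 0 ≤ x → 0 ≤ T x) (hTe : T e = e)
    (hS : IsRieszHom S) (hSe : S e = e)
    (H : ∀ P Q : E →ₗ[ℝ] E, IsBandProjection P → IsBandProjection Q →
      OrderConv (Dseq T S m (P e) (Q e)) 0)
    {x y : E} (hx : IsComb e x) (hy : IsComb e y) :
    OrderConv (Dseq T S m x y) 0 := by
  have step1 : ∀ (x' : E), IsComb e x' → ∀ Q : E →ₗ[ℝ] E, IsBandProjection Q →
      OrderConv (Dseq T S m x' (Q e)) 0 := by
    rintro x' ⟨M, a, P, hP, rfl⟩ Q hQ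
    induction M with
    | zero =>
      simp only [Finset.range_zero, Finset.sum_empty]
      exact good_zero_left hm he hT hTe (ideal_bp he hQ)
    | succ M ih =>
      rw [Finset.sum_range_succ]
      apply good_add_left hm he hT hTe hS hSe
        (ideal_comb he ⟨M, a, P, hP, rfl⟩)
        (ideal_smul (ideal_bp he (hP M)) (a M)) (ideal_bp he hQ) ih
      exact good_smul_left hm he hT hTe hS hSe (a M) (ideal_bp he (hP M)) (ideal_bp he hQ)
        (H (P M) Q (hP M) hQ)
  obtain ⟨N, b, Q, hQ, rfl⟩ := hy
  induction N with
  | zero =>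
    simp only [Finset.range_zero, Finset.sum_empty]
    exact good_zero_right hm he hT hTe hS hSe (ideal_comb he hx)
  | succ N ih =>
    rw [Finset.sum_range_succ]
    apply good_add_right hm he hT hTe hS hSe (ideal_comb he hx)
      (ideal_comb he ⟨N, b, Q, hQ, rfl⟩)
      (ideal_smul (ideal_bp he (hQ N)) (b N)) ih
    apply good_smul_right hm he hT hTe hS hSe (b N) (ideal_comb he hx)
      (ideal_bp he (hQ N))
    obtain ⟨M, a, P, hP, rfl⟩ := hx
    exact step1 _ ⟨M, a, P, hP, rfl⟩ (Q N) (hQ N)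

end Main

/-- bound `|m a b| ≤ (α*β)•e` from componentwise bounds. -/
lemma m_abs_bound {e : E} {m : E → E → E} (hm : IsFAlgMulOn e m) (he : 0 ≤ e)
    {a b : E} {α β : ℝ} (ha : a ∈ idealE e) (hb : b ∈ idealE e)
    (hα : |a| ≤ α • e) (hβ : |b| ≤ β • e) : |m a b| ≤ (α * β) • e := by
  calc |m a b| ≤ m |a| |b| := m_abs_le hm ha hb
    _ ≤ m (α • e) (β • e) :=
      m_mono_pair hm (ideal_abs ha) (ideal_smul_e he α) (ideal_abs hb) (ideal_smul_e he β)
        (abs_nonneg a) (abs_nonneg b) hα hβ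
    _ = (α * β) • e := m_scal hm he α β


end WMaux

open WMaux


/-- Conditional weak mixing for band projections is equivalent to the corresponding
statement for all `f, g ∈ E_e`. -/
theorem weakMixing_iff_ideal (T S : E →ₗ[ℝ] E) (e : E) (h : IsCEPS T S e)
    (m : E → E → E) (hm : IsFAlgMulOn e m) :
    (∀ P Q : E →ₗ[ℝ] E, IsBandProjection P → IsBandProjection Q →
        OrderConv (fun n => (n : ℝ)⁻¹ • ∑ k ∈ Finset.range n,
          |T (m ((S ^ k) (P e)) (Q e)) - m (T (P e)) (T (Q e))|) 0) ↔
      ∀ f ∈ idealE e, ∀ g ∈ idealE e,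
        OrderConv (fun n => (n : ℝ)⁻¹ • ∑ k ∈ Finset.range n,
          |T (m ((S ^ k) f) g) - m (T f) (T g)|) 0 := by
  obtain ⟨hDC, hWOU, hCE, hTe, hSr, hSoc, hSe, hTSP⟩ := h
  have he0 : 0 ≤ e := le_of_lt hWOU.1
  have hT : ∀ x : E, 0 ≤ x → 0 ≤ T x := fun x hx => hCE.2.2.2.1 x (Set.mem_univ x) hx
  constructor
  · intro H f hf g hg
    show OrderConv (Dseq T S m f g) 0
    have H' : ∀ P Q : E →ₗ[ℝ] E, IsBandProjection P → IsBandProjection Q →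
        OrderConv (Dseq T S m (P e) (Q e)) 0 := fun P Q hP hQ => H P Q hP hQ
    obtain ⟨kf, hkf0, hkf⟩ := hf
    obtain ⟨kg, hkg0, hkg⟩ := hg
    apply orderConv_of_eps hDC he0 (Dseq_nonneg T S m f g)
    intro ε hε
    set δ := min 1 (ε / (2 * kf + 2 * kg + 2)) with hδdef
    have hδ : 0 < δ := lt_min one_pos (by positivity)
    have hδ1 : δ ≤ 1 := min_le_left _ _
    have hδε : δ * (2 * kf + 2 * kg + 2) ≤ ε := by
      have h1 := min_le_right 1 (ε / (2 * kf + 2 * kg + 2))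
      calc δ * (2 * kf + 2 * kg + 2)
          ≤ (ε / (2 * kf + 2 * kg + 2)) * (2 * kf + 2 * kg + 2) :=
            mul_le_mul_of_nonneg_right h1 (by positivity)
        _ = ε := by field_simp
    obtain ⟨x, hxc, hxap⟩ := freudenthal hDC he0 hkf0 hkf hδ
    obtain ⟨y, hyc, hyap⟩ := freudenthal hDC he0 hkg0 hkg hδ
    have hxi : x ∈ idealE e := ideal_comb he0 hxc
    have hyi : y ∈ idealE e := ideal_comb he0 hyc
    have hfi : f ∈ idealE e := ⟨kf, hkf0, hkf⟩
    have hgi : g ∈ idealE e := ⟨kg, hkg0, hkg⟩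
    have hxb : |x| ≤ (kf + δ) • e := by
      have h1 : x = f - (f - x) := by abel
      calc |x| = |f - (f - x)| := by rw [← h1]
        _ ≤ |f| + |f - x| := by
            have h2 := abs_add_le f (-(f - x))
            rw [abs_neg] at h2
            simpa [sub_eq_add_neg] using h2
        _ ≤ kf • e + δ • e := add_le_add hkf hxap
        _ = (kf + δ) • e := (add_smul _ _ _).symm
    have hyb : |y| ≤ (kg + δ) • e := by
      have h1 : y = g - (g - y) := by abel
      calc |y| = |g - (g - y)| := by rw [← h1]
        _ ≤ |g| + |g - y| := by
            have h2 := abs_add_le g (-(g - y))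
            rw [abs_neg] at h2
            simpa [sub_eq_add_neg] using h2
        _ ≤ kg • e + δ • e := add_le_add hkg hyap
        _ = (kg + δ) • e := (add_smul _ _ _).symm
    set c1 : ℝ := δ * kg + (kf + δ) * δ with hc1
    set c2 : ℝ := δ * (kg + δ) + kf * δ with hc2
    have hc12 : c1 + c2 ≤ ε := by
      have hδ2 : δ * δ ≤ δ := by nlinarith
      nlinarith
    refine ⟨Dseq T S m x y, good_comb hm he0 hT hTe hSr hSe H' hxc hyc, ?_⟩
    intro n
    have hpt : ∀ k, |T (m ((S ^ k) f) g) - m (T f) (T g)| ≤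
        |T (m ((S ^ k) x) y) - m (T x) (T y)| + ε • e := by
      intro k
      have hSkfi : (S ^ k) f ∈ idealE e := ideal_Sk hSr hSe hfi k
      have hSkxi : (S ^ k) x ∈ idealE e := ideal_Sk hSr hSe hxi k
      have hSkfx : |(S ^ k) f - (S ^ k) x| ≤ δ • e := by
        rw [← map_sub]
        exact abs_Sk_le hSr hSe hxap k
      have hSkxb : |(S ^ k) x| ≤ (kf + δ) • e := abs_Sk_le hSr hSe hxb k
      -- core of term A
      have hAdec : m ((S ^ k) f) g - m ((S ^ k) x) y =
          m ((S ^ k) f - (S ^ k) x) g + m ((S ^ k) x) (g - y) := by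
        rw [m_sub_left hm hSkfi hSkxi hgi, m_sub_right hm hSkxi hgi hyi]
        abel
      have hAcore : |m ((S ^ k) f) g - m ((S ^ k) x) y| ≤ c1 • e := by
        rw [hAdec]
        calc |m ((S ^ k) f - (S ^ k) x) g + m ((S ^ k) x) (g - y)|
            ≤ |m ((S ^ k) f - (S ^ k) x) g| + |m ((S ^ k) x) (g - y)| := abs_add_le _ _
          _ ≤ (δ * kg) • e + ((kf + δ) * δ) • e := by
              apply add_le_add
              · exact m_abs_bound hm he0 (ideal_sub hSkfi hSkxi) hgi hSkfx hkg
              · exact m_abs_bound hm he0 hSkxi (ideal_sub hgi hyi) hSkxb hyap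
          _ = c1 • e := by rw [← add_smul, hc1]
      have hA : |T (m ((S ^ k) f) g) - T (m ((S ^ k) x) y)| ≤ c1 • e := by
        rw [← map_sub]
        exact abs_T_le_const hT hTe hAcore
      -- term C
      have hTfi : T f ∈ idealE e := ideal_T hT hfi hTe
      have hTxi : T x ∈ idealE e := ideal_T hT hxi hTe
      have hTyi : T y ∈ idealE e := ideal_T hT hyi hTe
      have hTgi : T g ∈ idealE e := ideal_T hT hgi hTe
      have hTxf : |T x - T f| ≤ δ • e := by
        rw [← map_sub]
        apply abs_T_le_const hT hTe
        have h1 : |x - f| = |f - x| := by rw [← abs_neg, neg_sub]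
        rw [h1]
        exact hxap
      have hTyg : |T y - T g| ≤ δ • e := by
        rw [← map_sub]
        apply abs_T_le_const hT hTe
        have h1 : |y - g| = |g - y| := by rw [← abs_neg, neg_sub]
        rw [h1]
        exact hyap
      have hTyb : |T y| ≤ (kg + δ) • e := abs_T_le_const hT hTe hyb
      have hTfb : |T f| ≤ kf • e := abs_T_le_const hT hTe hkf
      have hCdec : m (T x) (T y) - m (T f) (T g) =
          m (T x - T f) (T y) + m (T f) (T y - T g) := by
        rw [m_sub_left hm hTxi hTfi hTyi, m_sub_right hm hTfi hTyi hTgi]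
        abel
      have hC : |m (T x) (T y) - m (T f) (T g)| ≤ c2 • e := by
        rw [hCdec]
        calc |m (T x - T f) (T y) + m (T f) (T y - T g)|
            ≤ |m (T x - T f) (T y)| + |m (T f) (T y - T g)| := abs_add_le _ _
          _ ≤ (δ * (kg + δ)) • e + (kf * δ) • e := by
              apply add_le_add
              · exact m_abs_bound hm he0 (ideal_sub hTxi hTfi) hTyi hTxf hTyb
              · exact m_abs_bound hm he0 hTfi (ideal_sub hTyi hTgi) hTfb hTyg
          _ = c2 • e := by rw [← add_smul, hc2]
      -- combine
      have hterm : T (m ((S ^ k) f) g) - m (T f) (T g) =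
          (T (m ((S ^ k) x) y) - m (T x) (T y)) +
          ((T (m ((S ^ k) f) g) - T (m ((S ^ k) x) y)) +
            (m (T x) (T y) - m (T f) (T g))) := by abel
      calc |T (m ((S ^ k) f) g) - m (T f) (T g)|
          ≤ |T (m ((S ^ k) x) y) - m (T x) (T y)| +
            |(T (m ((S ^ k) f) g) - T (m ((S ^ k) x) y)) +
              (m (T x) (T y) - m (T f) (T g))| := by
            rw [hterm]; exact abs_add_le _ _
        _ ≤ |T (m ((S ^ k) x) y) - m (T x) (T y)| +
            (|T (m ((S ^ k) f) g) - T (m ((S ^ k) x) y)| +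
              |m (T x) (T y) - m (T f) (T g)|) := by
            apply add_le_add_right
            exact abs_add_le _ _
        _ ≤ |T (m ((S ^ k) x) y) - m (T x) (T y)| + (c1 • e + c2 • e) := by
            apply add_le_add_right
            exact add_le_add hA hC
        _ ≤ |T (m ((S ^ k) x) y) - m (T x) (T y)| + ε • e := by
            apply add_le_add_right
            rw [← add_smul]
            exact smul_mono_scalar hc12 he0
    calc Dseq T S m f g n
        ≤ (n : ℝ)⁻¹ • ∑ k ∈ Finset.range n,
          (|T (m ((S ^ k) x) y) - m (T x) (T y)| + ε • e) := cesaro_le hpt n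
      _ = Dseq T S m x y n + (n : ℝ)⁻¹ • ∑ _k ∈ Finset.range n, ε • e := cesaro_add _ _ n
      _ ≤ Dseq T S m x y n + ε • e :=
          add_le_add_right (cesaro_const_le (smul_nonneg' hε.le he0) n) _
  · intro H P Q hP hQ
    exact H (P e) (ideal_bp he0 hP) (Q e) (ideal_bp he0 hQ)
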